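/- Let S be a Noetherian commutative ring and let A and B be commutative S-algebras. The following are equivalent: (1) for every n and all polynomials p_1, …, p_s, q_1, …, q_t in S[X_1, …, X_n], if there is a ∈ A^n with p_k(a) = 0 for all k and q_l(a) ≠ 0 for all l, then there is b ∈ B^n with p_k(b) = 0 for all k and q_l(b) ≠ 0 for all l; (2) for every finitely generated S-subalgebra V of A and every finite list of nonzero elements a_1, …, a_m of V there exists an S-algebra homomorphism φ : V → B with φ(a_j) ≠ 0 for all j; (3) there exist an infinite set ι, a nonprincipal ultrafilter U on ι, and an injective ring homomorphism η : A → (∏_{i∈ι} B)/I_U such that η(algebraMap S A s) equals the class of the constant sequence with value algebraMap S B s, for every s ∈ S. -/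

import Mathlib

def ultraIdeal {ι : Type*} (R : ι → Type*) [∀ i, CommRing (R i)] (U : Ultrafilter ι) :
    Ideal (∀ i, R i) where
  carrier := {f | {i | f i = 0} ∈ U}
  zero_mem' := Filter.univ_mem' (fun i => rfl)
  add_mem' := by
    intro f g hf hg
    refine U.toFilter.mem_of_superset (Filter.inter_mem hf hg) ?_
    rintro i ⟨hfi, hgi⟩
    simp only [Set.mem_setOf_eq] at *
    rw [Pi.add_apply, hfi, hgi, add_zero]
  smul_mem' := by
    intro c f hf
    refine U.toFilter.mem_of_superset hf ?_
    intro i hfi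
    simp only [Set.mem_setOf_eq] at *
    rw [smul_eq_mul, Pi.mul_apply, hfi, mul_zero]

theorem mem_ultraIdeal {ι : Type*} {R : ι → Type*} [∀ i, CommRing (R i)] {U : Ultrafilter ι}
    {f : ∀ i, R i} : f ∈ ultraIdeal R U ↔ {i | f i = 0} ∈ U := Iff.rfl

theorem aux31 (S A B : Type) [CommRing S]
    [CommRing A] [CommRing B] [Algebra S A] [Algebra S B]
    (h3 : ∃ (ι : Type) (U : Ultrafilter ι), Infinite ι ∧
          (∀ s : Set ι, s.Finite → s ∉ U) ∧
          ∃ η : A →+* ((∀ _ : ι, B) ⧸ ultraIdeal (fun _ : ι => B) U),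
            Function.Injective η ∧
            ∀ s : S, η (algebraMap S A s) =
              Ideal.Quotient.mk (ultraIdeal (fun _ : ι => B) U)
                (fun _ => algebraMap S B s)) :
    ∀ (n s t : ℕ) (p : Fin s → MvPolynomial (Fin n) S) (q : Fin t → MvPolynomial (Fin n) S),
          (∃ a : Fin n → A, (∀ k, MvPolynomial.aeval a (p k) = 0) ∧
            (∀ l, MvPolynomial.aeval a (q l) ≠ 0)) →
          (∃ b : Fin n → B, (∀ k, MvPolynomial.aeval b (p k) = 0) ∧
            (∀ l, MvPolynomial.aeval b (q l) ≠ 0)) := by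
  obtain ⟨ι, U, _, _, η, hinj, hcompat⟩ := h3
  rintro n s t p q ⟨a, hp, hq⟩
  let I := ultraIdeal (fun _ : ι => B) U
  have halg : ∀ s : S, algebraMap S ((∀ _ : ι, B) ⧸ I) s
      = Ideal.Quotient.mk I (fun _ => algebraMap S B s) := fun s => rfl
  let ηₐ : A →ₐ[S] ((∀ _ : ι, B) ⧸ I) :=
    { η with commutes' := fun s => (hcompat s).trans (halg s).symm }
  have hηa : ∀ x : A, ηₐ x = η x := fun _ => rfl
  choose g hg using fun j => Ideal.Quotient.mk_surjective (I := I) (ηₐ (a j))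
  have key : ∀ r : MvPolynomial (Fin n) S,
      ηₐ (MvPolynomial.aeval a r)
        = Ideal.Quotient.mk I (fun i => MvPolynomial.aeval (fun j => g j i) r) := by
    intro r
    have h1 : ∀ i, (MvPolynomial.aeval g r) i = MvPolynomial.aeval (fun j => g j i) r :=
      fun i => MvPolynomial.comp_aeval_apply g (Pi.evalAlgHom S (fun _ : ι => B) i) r
    calc ηₐ (MvPolynomial.aeval a r)
        = MvPolynomial.aeval (fun j => ηₐ (a j)) r := MvPolynomial.comp_aeval_apply a ηₐ r
      _ = MvPolynomial.aeval (fun j => (Ideal.Quotient.mkₐ S I) (g j)) r :=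
          congrArg (fun v : Fin n → ((∀ _ : ι, B) ⧸ I) => MvPolynomial.aeval v r)
            (funext fun j => by rw [Ideal.Quotient.mkₐ_eq_mk, hg j])
      _ = (Ideal.Quotient.mkₐ S I) (MvPolynomial.aeval g r) :=
          (MvPolynomial.comp_aeval_apply g (Ideal.Quotient.mkₐ S I) r).symm
      _ = Ideal.Quotient.mk I (fun i => MvPolynomial.aeval (fun j => g j i) r) := by
          rw [Ideal.Quotient.mkₐ_eq_mk]
          exact congrArg (Ideal.Quotient.mk I) (funext h1)
  have hZ : ∀ k, {i | MvPolynomial.aeval (fun j => g j i) (p k) = 0} ∈ U := by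
    intro k
    have : ηₐ (MvPolynomial.aeval a (p k)) = 0 := by rw [hp k, map_zero]
    rw [key] at this
    exact mem_ultraIdeal.1 (Ideal.Quotient.eq_zero_iff_mem.1 this)
  have hW : ∀ l, {i | MvPolynomial.aeval (fun j => g j i) (q l) = 0}ᶜ ∈ U := by
    intro l
    have hne : ηₐ (MvPolynomial.aeval a (q l)) ≠ 0 := by
      intro h
      apply hq l
      apply hinj
      rw [← hηa, h, map_zero]
    rw [key] at hne
    have : {i | MvPolynomial.aeval (fun j => g j i) (q l) = 0} ∉ U := by
      intro hmem
      exact hne (Ideal.Quotient.eq_zero_iff_mem.2 (mem_ultraIdeal.2 hmem))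
    exact (Ultrafilter.compl_mem_iff_notMem).2 this
  have hT : ((⋂ k, {i | MvPolynomial.aeval (fun j => g j i) (p k) = 0}) ∩
      (⋂ l, {i | MvPolynomial.aeval (fun j => g j i) (q l) = 0}ᶜ)) ∈ U :=
    Filter.inter_mem (Filter.iInter_mem.2 hZ) (Filter.iInter_mem.2 hW)
  obtain ⟨i, hi1, hi2⟩ := Filter.nonempty_of_mem hT
  simp only [Set.mem_iInter, Set.mem_setOf_eq, Set.mem_compl_iff] at hi1 hi2
  exact ⟨fun j => g j i, hi1, hi2⟩

theorem aux12 (S A B : Type) [CommRing S] [IsNoetherianRing S]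
    [CommRing A] [CommRing B] [Algebra S A] [Algebra S B]
    (h1 : ∀ (n s t : ℕ) (p : Fin s → MvPolynomial (Fin n) S) (q : Fin t → MvPolynomial (Fin n) S),
          (∃ a : Fin n → A, (∀ k, MvPolynomial.aeval a (p k) = 0) ∧
            (∀ l, MvPolynomial.aeval a (q l) ≠ 0)) →
          (∃ b : Fin n → B, (∀ k, MvPolynomial.aeval b (p k) = 0) ∧
            (∀ l, MvPolynomial.aeval b (q l) ≠ 0))) :
    ∀ V : Subalgebra S A, V.FG → ∀ (m : ℕ) (a : Fin m → V), (∀ j, a j ≠ 0) →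
          ∃ φ : V →ₐ[S] B, ∀ j, φ (a j) ≠ 0 := by
  classical
  intro V hV m a ha
  obtain ⟨T, hT⟩ := hV
  set n := T.card with hn
  let x : Fin n → A := fun j => (T.equivFin.symm j : A)
  have hxrange : Set.range x = (T : Set A) := by
    ext y
    constructor
    · rintro ⟨j, rfl⟩; exact (T.equivFin.symm j).2
    · intro hy; exact ⟨T.equivFin ⟨y, hy⟩, by simp [x]⟩
  let π : MvPolynomial (Fin n) S →ₐ[S] A := MvPolynomial.aeval x
  have hπrange : π.range = V := by
    rw [← hT, ← Algebra.adjoin_range_eq_range_aeval, hxrange]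
  -- kernel is finitely generated
  have : IsNoetherianRing (MvPolynomial (Fin n) S) := inferInstance
  obtain ⟨G, hG⟩ := (IsNoetherian.noetherian (RingHom.ker (π : MvPolynomial (Fin n) S →+* A)))
  set s := G.card with hs
  let p : Fin s → MvPolynomial (Fin n) S := fun k => (G.equivFin.symm k : MvPolynomial (Fin n) S)
  -- representatives of the a j
  have hrep : ∀ j, ∃ r : MvPolynomial (Fin n) S, π r = (a j : A) := by
    intro j
    have : (a j : A) ∈ π.range := hπrange.symm ▸ (a j).2
    obtain ⟨r, hr⟩ := this
    exact ⟨r, hr⟩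
  choose q hq using hrep
  -- apply h1
  have hx1 : ∀ k, MvPolynomial.aeval x (p k) = 0 := by
    intro k
    have hk : p k ∈ RingHom.ker (π : MvPolynomial (Fin n) S →+* A) := by
      rw [← hG]
      exact Ideal.subset_span (G.equivFin.symm k).2
    exact hk
  have hx2 : ∀ j, MvPolynomial.aeval x (q j) ≠ 0 := by
    intro j
    rw [hq j]
    intro h
    exact ha j (Subtype.ext h)
  obtain ⟨b, hbp, hbq⟩ := h1 n s m p q ⟨x, hx1, hx2⟩
  · -- build φ
    let ψ : MvPolynomial (Fin n) S →ₐ[S] B := MvPolynomial.aeval b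
    let π' : MvPolynomial (Fin n) S →ₐ[S] V :=
      π.codRestrict V (fun r => hπrange ▸ π.mem_range_self r)
    have hπ' : ∀ r, (π' r : A) = π r := fun r => rfl
    have hπ'surj : Function.Surjective π' := by
      intro v
      have : (v : A) ∈ π.range := hπrange.symm ▸ v.2
      obtain ⟨r, hr⟩ := this
      exact ⟨r, Subtype.ext hr⟩
    have hmemker : ∀ r, r ∈ RingHom.ker π' ↔ π r = 0 := by
      intro r
      rw [RingHom.mem_ker]
      constructor
      · intro h
        have h2 := congrArg Subtype.val h
        rwa [ZeroMemClass.coe_zero] at h2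
      · intro h
        exact Subtype.ext (by rw [ZeroMemClass.coe_zero]; exact h)
    have hkerψ : ∀ r ∈ RingHom.ker π', ψ r = 0 := by
      intro r hr
      have hr' : r ∈ Submodule.span (MvPolynomial (Fin n) S) (G : Set (MvPolynomial (Fin n) S)) := by
        rw [hG, RingHom.mem_ker]
        exact (hmemker r).1 hr
      refine Submodule.span_induction (fun g hg => ?_) (map_zero ψ)
        (fun u v _ _ hu hv => by rw [map_add, hu, hv, add_zero])
        (fun c u _ hu => by rw [smul_eq_mul, map_mul, hu, mul_zero]) hr'
      have : g = p (G.equivFin ⟨g, hg⟩) := by simp [p]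
      rw [this]
      exact hbp _
    let e := Ideal.quotientKerAlgEquivOfSurjective hπ'surj
    let φ : V →ₐ[S] B :=
      (Ideal.Quotient.liftₐ (RingHom.ker π') ψ hkerψ).comp (e.symm.toAlgHom)
    refine ⟨φ, fun j => ?_⟩
    have h1j : π' (q j) = a j := Subtype.ext (hq j)
    have h2j : e.symm (a j) = Ideal.Quotient.mk _ (q j) := by
      apply e.injective
      rw [AlgEquiv.apply_symm_apply]
      rw [← h1j]
      rfl
    show (Ideal.Quotient.liftₐ _ ψ hkerψ) (e.symm (a j)) ≠ 0
    rw [h2j, Ideal.Quotient.liftₐ_apply]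
    exact hbq j

theorem aux23 (S A B : Type) [CommRing S]
    [CommRing A] [CommRing B] [Algebra S A] [Algebra S B]
    (h2 : ∀ V : Subalgebra S A, V.FG → ∀ (m : ℕ) (a : Fin m → V), (∀ j, a j ≠ 0) →
          ∃ φ : V →ₐ[S] B, ∀ j, φ (a j) ≠ 0) :
    ∃ (ι : Type) (U : Ultrafilter ι), Infinite ι ∧
          (∀ s : Set ι, s.Finite → s ∉ U) ∧
          ∃ η : A →+* ((∀ _ : ι, B) ⧸ ultraIdeal (fun _ : ι => B) U),
            Function.Injective η ∧
            ∀ s : S, η (algebraMap S A s) =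
              Ideal.Quotient.mk (ultraIdeal (fun _ : ι => B) U)
                (fun _ => algebraMap S B s) := by
  classical
  -- the index type of "approximations"
  let I : Type := {p : Subalgebra S A × Finset A // p.1.FG ∧ ∀ x ∈ p.2, x ∈ p.1 ∧ x ≠ 0}
  -- choose a hom for each approximation
  have hchoice : ∀ i : I, ∃ φ : (i.1.1 : Subalgebra S A) →ₐ[S] B,
      ∀ x, ∀ hx : x ∈ i.1.2, φ ⟨x, (i.2.2 x hx).1⟩ ≠ 0 := by
    rintro ⟨⟨V, T⟩, hFG, hT⟩
    obtain ⟨φ, hφ⟩ := h2 V hFG T.card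
      (fun j => ⟨(T.equivFin.symm j : A), (hT _ (T.equivFin.symm j).2).1⟩)
      (fun j => by
        intro h
        exact (hT _ (T.equivFin.symm j).2).2 (congrArg Subtype.val h))
    refine ⟨φ, fun x hx => ?_⟩
    have h0 := hφ (T.equivFin ⟨x, hx⟩)
    have heq : (⟨((T.equivFin.symm (T.equivFin ⟨x, hx⟩)) : A),
        (hT _ (T.equivFin.symm (T.equivFin ⟨x, hx⟩)).2).1⟩ : V) = ⟨x, (hT x hx).1⟩ := by
      apply Subtype.ext
      show ((T.equivFin.symm (T.equivFin ⟨x, hx⟩) : A)) = x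
      rw [T.equivFin.symm_apply_apply]
    rwa [heq] at h0
  choose φs hφs using hchoice
  -- pointwise approximation of elements of A
  let η0 : A → (I × ℕ) → B := fun a i =>
    if h : a ∈ i.1.1.1 then φs i.1 ⟨a, h⟩ else 0
  -- generating sets for the ultrafilter
  let C : Finset A → Set I := fun E => {j | ∀ x ∈ E, x ∈ j.1.1 ∧ (x ≠ 0 → x ∈ j.1.2)}
  let D : Finset A × ℕ → Set (I × ℕ) := fun EN => (C EN.1) ×ˢ (Set.Ici EN.2)
  let gens : Set (Set (I × ℕ)) := Set.range D
  -- a canonical element of C E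
  have hmemI : ∀ E : Finset A, (∀ x ∈ E.filter (fun y => y ≠ 0),
      x ∈ Algebra.adjoin S (E : Set A) ∧ x ≠ 0) := by
    intro E x hx
    rw [Finset.mem_filter] at hx
    exact ⟨Algebra.subset_adjoin hx.1, hx.2⟩
  let jE : Finset A → I := fun E =>
    ⟨(Algebra.adjoin S (E : Set A), E.filter (fun y => y ≠ 0)), ⟨E, rfl⟩, hmemI E⟩
  have hjE : ∀ E, jE E ∈ C E := by
    intro E x hx
    exact ⟨Algebra.subset_adjoin hx, fun hne => Finset.mem_filter.2 ⟨hx, hne⟩⟩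
  have hCmono : ∀ E E' : Finset A, E ⊆ E' → C E' ⊆ C E := by
    intro E E' hEE j hj x hx
    exact hj x (hEE hx)
  -- the generated filter is proper
  have hNeBot : Filter.NeBot (Filter.generate gens) := by
    rw [Filter.generate_neBot_iff]
    intro t hts htfin
    have key : t ⊆ gens → ∃ (E : Finset A) (N : ℕ), D (E, N) ⊆ ⋂₀ t := by
      refine Set.Finite.induction_on t htfin (fun _ => ⟨∅, 0, by simp⟩) ?_
      rintro u t' _ _ IH hsub
      obtain ⟨E2, N2, h2'⟩ := IH (fun v hv => hsub (Set.mem_insert_of_mem _ hv))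
      obtain ⟨⟨E1, N1⟩, rfl⟩ := hsub (Set.mem_insert _ _)
      refine ⟨E1 ∪ E2, max N1 N2, ?_⟩
      rintro ⟨j, n⟩ ⟨hj, hn⟩
      rw [Set.sInter_insert]
      refine ⟨⟨hCmono E1 (E1 ∪ E2) Finset.subset_union_left hj,
        le_trans (le_max_left N1 N2) hn⟩, ?_⟩
      exact h2' ⟨hCmono E2 (E1 ∪ E2) Finset.subset_union_right hj,
        le_trans (le_max_right N1 N2) hn⟩
    obtain ⟨E, N, hsub⟩ := key hts
    exact ⟨(jE E, N), hsub ⟨hjE E, le_refl N⟩⟩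
  -- the ultrafilter
  let U : Ultrafilter (I × ℕ) := @Ultrafilter.of _ (Filter.generate gens) hNeBot
  have hgen : ∀ (E : Finset A) (N : ℕ), D (E, N) ∈ U := fun E N =>
    (@Ultrafilter.of_le _ (Filter.generate gens) hNeBot)
      (Filter.mem_generate_of_mem ⟨(E, N), rfl⟩)
  set J := ultraIdeal (fun _ : I × ℕ => B) U with hJ
  -- basic evaluation facts
  have hη0 : ∀ (a : A) (i : I × ℕ) (h : a ∈ i.1.1.1), η0 a i = φs i.1 ⟨a, h⟩ := by
    intro a i h
    simp only [η0, dif_pos h]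
  -- η as a ring hom
  have hadd : ∀ a b : A, Ideal.Quotient.mk J (η0 (a + b))
      = Ideal.Quotient.mk J (η0 a) + Ideal.Quotient.mk J (η0 b) := by
    intro a b
    rw [← RingHom.map_add (Ideal.Quotient.mk J)]
    rw [Ideal.Quotient.eq]
    refine mem_ultraIdeal.2 (U.toFilter.mem_of_superset (hgen {a, b} 0) ?_)
    rintro ⟨j, n⟩ ⟨hj, -⟩
    have ha : a ∈ j.1.1 := (hj a (by simp)).1
    have hb : b ∈ j.1.1 := (hj b (by simp)).1
    have hab : a + b ∈ j.1.1 := add_mem ha hb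
    show η0 (a + b) (j, n) - (η0 a + η0 b) (j, n) = 0
    rw [Pi.add_apply, hη0 (a + b) (j, n) hab, hη0 a (j, n) ha, hη0 b (j, n) hb]
    rw [sub_eq_zero]
    rw [← map_add]
    congr 1
  have hmul : ∀ a b : A, Ideal.Quotient.mk J (η0 (a * b))
      = Ideal.Quotient.mk J (η0 a) * Ideal.Quotient.mk J (η0 b) := by
    intro a b
    rw [← RingHom.map_mul (Ideal.Quotient.mk J)]
    rw [Ideal.Quotient.eq]
    refine mem_ultraIdeal.2 (U.toFilter.mem_of_superset (hgen {a, b} 0) ?_)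
    rintro ⟨j, n⟩ ⟨hj, -⟩
    have ha : a ∈ j.1.1 := (hj a (by simp)).1
    have hb : b ∈ j.1.1 := (hj b (by simp)).1
    have hab : a * b ∈ j.1.1 := mul_mem ha hb
    show η0 (a * b) (j, n) - (η0 a * η0 b) (j, n) = 0
    rw [Pi.mul_apply, hη0 (a * b) (j, n) hab, hη0 a (j, n) ha, hη0 b (j, n) hb]
    rw [sub_eq_zero]
    rw [← map_mul]
    congr 1
  have hone : Ideal.Quotient.mk J (η0 1) = 1 := by
    have : η0 1 = 1 := by
      funext i
      rw [hη0 1 i (one_mem i.1.1.1)]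
      show φs i.1 ⟨1, one_mem i.1.1.1⟩ = 1
      rw [show (⟨1, one_mem i.1.1.1⟩ : i.1.1.1) = 1 from rfl, map_one]
    rw [this, map_one]
  let η : A →+* ((∀ _ : I × ℕ, B) ⧸ J) :=
    { toFun := fun a => Ideal.Quotient.mk J (η0 a)
      map_one' := hone
      map_mul' := hmul
      map_zero' := by
        show Ideal.Quotient.mk J (η0 0) = 0
        have : η0 0 = 0 := by
          funext i
          rw [hη0 0 i (zero_mem i.1.1.1)]
          show φs i.1 ⟨0, zero_mem i.1.1.1⟩ = 0
          rw [show (⟨0, zero_mem i.1.1.1⟩ : i.1.1.1) = 0 from rfl, map_zero]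
        rw [this, map_zero]
      map_add' := hadd }
  -- injectivity
  have hinj : Function.Injective η := by
    rw [injective_iff_map_eq_zero]
    intro a ha
    by_contra hne
    have h1 : {i : I × ℕ | η0 a i = 0} ∈ U :=
      mem_ultraIdeal.1 (Ideal.Quotient.eq_zero_iff_mem.1 ha)
    have h2 : {i : I × ℕ | η0 a i = 0}ᶜ ∈ U := by
      refine U.toFilter.mem_of_superset (hgen {a} 0) ?_
      rintro ⟨j, n⟩ ⟨hj, -⟩
      have haj : a ∈ j.1.1 := (hj a (by simp)).1
      have haT : a ∈ j.1.2 := (hj a (by simp)).2 hne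
      show ¬ (η0 a (j, n) = 0)
      rw [hη0 a (j, n) haj]
      exact hφs j a haT
    obtain ⟨i, hi1, hi2⟩ := Filter.nonempty_of_mem (Filter.inter_mem h1 h2)
    exact hi2 hi1
  -- compatibility with S
  have hcompat : ∀ s : S, η (algebraMap S A s)
      = Ideal.Quotient.mk J (fun _ => algebraMap S B s) := by
    intro s
    show Ideal.Quotient.mk J (η0 (algebraMap S A s)) = _
    congr 1
    funext i
    have hm : algebraMap S A s ∈ i.1.1.1 := Subalgebra.algebraMap_mem _ s
    rw [hη0 _ i hm]
    show φs i.1 ⟨algebraMap S A s, hm⟩ = algebraMap S B s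
    rw [show (⟨algebraMap S A s, hm⟩ : i.1.1.1) = algebraMap S i.1.1.1 s from rfl,
      AlgHom.commutes]
  -- nonprincipality
  have hnp : ∀ s : Set (I × ℕ), s.Finite → s ∉ U := by
    intro s hs hsU
    obtain ⟨N, hN⟩ := (hs.image Prod.snd).bddAbove
    have hD : D (∅, N + 1) ∈ U := hgen ∅ (N + 1)
    obtain ⟨i, hi1, hi2⟩ := Filter.nonempty_of_mem (Filter.inter_mem hsU hD)
    have : i.2 ≤ N := hN ⟨i, hi1, rfl⟩
    have : N + 1 ≤ i.2 := hi2.2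
    omega
  -- infiniteness
  haveI : Nonempty I := ⟨jE ∅⟩
  haveI : Infinite (I × ℕ) := Prod.infinite_of_right
  exact ⟨I × ℕ, U, inferInstance, hnp, η, hinj, hcompat⟩

theorem stmt7 (S A B : Type) [CommRing S] [IsNoetherianRing S]
    [CommRing A] [CommRing B] [Algebra S A] [Algebra S B] :
    List.TFAE
      [ ∀ (n s t : ℕ) (p : Fin s → MvPolynomial (Fin n) S) (q : Fin t → MvPolynomial (Fin n) S),
          (∃ a : Fin n → A, (∀ k, MvPolynomial.aeval a (p k) = 0) ∧
            (∀ l, MvPolynomial.aeval a (q l) ≠ 0)) →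
          (∃ b : Fin n → B, (∀ k, MvPolynomial.aeval b (p k) = 0) ∧
            (∀ l, MvPolynomial.aeval b (q l) ≠ 0)),
        ∀ V : Subalgebra S A, V.FG → ∀ (m : ℕ) (a : Fin m → V), (∀ j, a j ≠ 0) →
          ∃ φ : V →ₐ[S] B, ∀ j, φ (a j) ≠ 0,
        ∃ (ι : Type) (U : Ultrafilter ι), Infinite ι ∧
          (∀ s : Set ι, s.Finite → s ∉ U) ∧
          ∃ η : A →+* ((∀ _ : ι, B) ⧸ ultraIdeal (fun _ : ι => B) U),
            Function.Injective η ∧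
            ∀ s : S, η (algebraMap S A s) =
              Ideal.Quotient.mk (ultraIdeal (fun _ : ι => B) U)
                (fun _ => algebraMap S B s) ] := by
  tfae_have 1 → 2 := aux12 S A B
  tfae_have 2 → 3 := aux23 S A B
  tfae_have 3 → 1 := aux31 S A B
  tfae_finish
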